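/- Let G be an MP-tree and suppose there exists an edge e = (v,w) that is a coloop of the multipath matroid M_G. Then for every integer k ≥ 1, the number of flowing k-colourings satisfies τ_G(k) = (k-1) · τ_{G/e}(k), where G/e is the classical graph contraction of e (identifying v and w). -/

import Mathlib

set_option autoImplicit false

noncomputable section

attribute [local instance] Classical.propDecidable

/-- A (finite) directed multigraph: finitely many vertices and edges, each edge
has a source and a target.  (Loops and, a priori, parallel edges are allowed;
the paper's convention of at most one edge between an ordered pair of distinct
vertices is imposed via `DiGraph.EdgeUnique`.) -/
structure DiGraph where
  V : Type
  E : Type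
  [fintV : Fintype V]
  [decV : DecidableEq V]
  [fintE : Fintype E]
  [decE : DecidableEq E]
  s : E → V
  t : E → V

attribute [instance] DiGraph.fintV DiGraph.decV DiGraph.fintE DiGraph.decE

namespace DiGraph

/-- For each ordered pair of *distinct* vertices there is at most one edge. -/
def EdgeUnique (G : DiGraph) : Prop :=
  ∀ e f : G.E, G.s e = G.s f → G.t e = G.t f → G.s e ≠ G.t e → e = f

/-- G has no loops. -/
def Loopless (G : DiGraph) : Prop := ∀ e : G.E, G.s e ≠ G.t e

/-- A coherently oriented cycle, given as the (cyclically ordered) list of its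
edges: the list is nonempty, has no repeated edges, visits no vertex twice,
and the target of each edge is the source of the next one (cyclically).
A loop is a coherently oriented cycle of length 1. -/
def IsCohCycle (G : DiGraph) (c : List G.E) : Prop :=
  c ≠ [] ∧ c.Nodup ∧ (c.map G.s).Nodup ∧
    ∀ i : Fin c.length,
      G.t (c.get i) =
        G.s (c.get ⟨(i.val + 1) % c.length,
          Nat.mod_lt _ (Nat.lt_of_le_of_lt (Nat.zero_le _) i.isLt)⟩)

/-- `m` is (the edge set of) a multipath of `G`: the corresponding spanning
subgraph has no loops, in-degree and out-degree at most one at each vertex, and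
contains no coherently oriented cycle; equivalently, every connected component
is a single vertex or a simple (directed) path. -/
def IsMultipath (G : DiGraph) (m : Finset G.E) : Prop :=
  (∀ e ∈ m, G.s e ≠ G.t e) ∧
  (∀ e ∈ m, ∀ f ∈ m, G.s e = G.s f → e = f) ∧
  (∀ e ∈ m, ∀ f ∈ m, G.t e = G.t f → e = f) ∧
  ¬∃ c : List G.E, IsCohCycle G c ∧ ∀ g ∈ c, g ∈ m

/-- The forbidden pattern (A): vertices v0,v1,v2 and edges (v1,v0), (v0,v2), (v1,v2). -/
def HasPatternA (G : DiGraph) : Prop :=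
  ∃ v0 v1 v2 : G.V, v0 ≠ v1 ∧ v0 ≠ v2 ∧ v1 ≠ v2 ∧
    (∃ e : G.E, G.s e = v1 ∧ G.t e = v0) ∧
    (∃ e : G.E, G.s e = v0 ∧ G.t e = v2) ∧
    (∃ e : G.E, G.s e = v1 ∧ G.t e = v2)

/-- The reverse of pattern (A). -/
def HasPatternArev (G : DiGraph) : Prop :=
  ∃ v0 v1 v2 : G.V, v0 ≠ v1 ∧ v0 ≠ v2 ∧ v1 ≠ v2 ∧
    (∃ e : G.E, G.s e = v0 ∧ G.t e = v1) ∧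
    (∃ e : G.E, G.s e = v2 ∧ G.t e = v0) ∧
    (∃ e : G.E, G.s e = v2 ∧ G.t e = v1)

/-- The forbidden pattern (B): vertices v0,v1,v2,v3 and edges (v0,v1), (v2,v1), (v2,v3). -/
def HasPatternB (G : DiGraph) : Prop :=
  ∃ v0 v1 v2 v3 : G.V,
    v0 ≠ v1 ∧ v0 ≠ v2 ∧ v0 ≠ v3 ∧ v1 ≠ v2 ∧ v1 ≠ v3 ∧ v2 ≠ v3 ∧
    (∃ e : G.E, G.s e = v0 ∧ G.t e = v1) ∧
    (∃ e : G.E, G.s e = v2 ∧ G.t e = v1) ∧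
    (∃ e : G.E, G.s e = v2 ∧ G.t e = v3)

/-- The reverse of pattern (B). -/
def HasPatternBrev (G : DiGraph) : Prop :=
  ∃ v0 v1 v2 v3 : G.V,
    v0 ≠ v1 ∧ v0 ≠ v2 ∧ v0 ≠ v3 ∧ v1 ≠ v2 ∧ v1 ≠ v3 ∧ v2 ≠ v3 ∧
    (∃ e : G.E, G.s e = v1 ∧ G.t e = v0) ∧
    (∃ e : G.E, G.s e = v1 ∧ G.t e = v2) ∧
    (∃ e : G.E, G.s e = v3 ∧ G.t e = v2)

/-- (MP1): G contains no copy, up to reversing all orientations, of the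
patterns (A) and (B). -/
def MP1 (G : DiGraph) : Prop :=
  ¬HasPatternA G ∧ ¬HasPatternArev G ∧ ¬HasPatternB G ∧ ¬HasPatternBrev G

/-- (MP2): every coherently oriented cycle of length ≥ 2 (i.e. loops excluded)
is a connected component: any edge incident to a vertex of the cycle belongs
to the cycle. -/
def MP2 (G : DiGraph) : Prop :=
  ∀ c : List G.E, IsCohCycle G c → 2 ≤ c.length →
    ∀ f : G.E, (∃ g ∈ c, G.s g = G.s f ∨ G.s g = G.t f) → f ∈ c

def IsMPDigraph (G : DiGraph) : Prop := MP1 G ∧ MP2 G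

/-- The axioms (I1), (I2), (I3) for a family of independent sets of a matroid. -/
def IsIndepFamily {α : Type} [DecidableEq α] (I : Finset α → Prop) : Prop :=
  I ∅ ∧ (∀ A B : Finset α, I A → B ⊆ A → I B) ∧
    ∀ A B : Finset α, I A → I B → B.card < A.card →
      ∃ x ∈ A, x ∉ B ∧ I (insert x B)

/-- `m` is the edge set of a linear sink (two non-loop edges with a common
target and distinct sources). -/
def IsLinearSinkSet (G : DiGraph) (m : Finset G.E) : Prop :=
  ∃ e1 e2 : G.E, e1 ≠ e2 ∧ m = {e1, e2} ∧ G.t e1 = G.t e2 ∧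
    G.s e1 ≠ G.s e2 ∧ G.s e1 ≠ G.t e1 ∧ G.s e2 ≠ G.t e2

/-- `m` is the edge set of a linear source (two non-loop edges with a common
source and distinct targets). -/
def IsLinearSourceSet (G : DiGraph) (m : Finset G.E) : Prop :=
  ∃ e1 e2 : G.E, e1 ≠ e2 ∧ m = {e1, e2} ∧ G.s e1 = G.s e2 ∧
    G.t e1 ≠ G.t e2 ∧ G.s e1 ≠ G.t e1 ∧ G.s e2 ≠ G.t e2

/-- `m` is the edge set of a coherently oriented cycle (possibly a loop). -/
def IsCohCycleSet (G : DiGraph) (m : Finset G.E) : Prop :=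
  ∃ c : List G.E, IsCohCycle G c ∧ m = c.toFinset

/-- Two vertices are adjacent if they are the endpoints of a common edge. -/
def adj (G : DiGraph) (v w : G.V) : Prop :=
  ∃ e : G.E, (G.s e = v ∧ G.t e = w) ∨ (G.s e = w ∧ G.t e = v)

/-- Two vertices lie in the same connected component. -/
def connRel (G : DiGraph) : G.V → G.V → Prop := Relation.EqvGen (adj G)

/-- G is connected. -/
def ConnectedD (G : DiGraph) : Prop := Nonempty G.V ∧ ∀ v w : G.V, connRel G v w

/-- The number of connected components of G (isolated vertices count). -/
def numComponents (G : DiGraph) : ℕ :=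
  Nat.card (Quotient (Relation.EqvGen.setoid (adj G)))

/-- `S` is the set of edges of one of the connected components of `G`. -/
def IsComponentEdges (G : DiGraph) (S : Finset G.E) : Prop :=
  ∃ v : G.V, S = Finset.univ.filter (fun e => connRel G v (G.s e))

/-- in-degree of `v` in the subgraph spanned by the edges of `R`. -/
def indegIn (G : DiGraph) (R : Finset G.E) (v : G.V) : ℕ :=
  (R.filter (fun e => G.t e = v)).card

/-- out-degree of `v` in the subgraph spanned by the edges of `R`. -/
def outdegIn (G : DiGraph) (R : Finset G.E) (v : G.V) : ℕ :=
  (R.filter (fun e => G.s e = v)).card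

def indeg (G : DiGraph) (v : G.V) : ℕ := indegIn G Finset.univ v
def outdeg (G : DiGraph) (v : G.V) : ℕ := outdegIn G Finset.univ v

/-- `v` is a vertex of the subgraph spanned by the edge set `R`. -/
def IncidentTo (G : DiGraph) (R : Finset G.E) (v : G.V) : Prop :=
  ∃ e ∈ R, G.s e = v ∨ G.t e = v

/-- `v` is stable in the subgraph spanned by `R`. -/
def StableIn (G : DiGraph) (R : Finset G.E) (v : G.V) : Prop :=
  indegIn G R v = 0 ∨ outdegIn G R v = 0

/-- `v` is unstable in `G`. -/
def UnstableG (G : DiGraph) (v : G.V) : Prop :=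
  0 < indeg G v ∧ 0 < outdeg G v

/-- adjacency within the subgraph spanned by `R`. -/
def adjIn (G : DiGraph) (R : Finset G.E) (a b : G.V) : Prop :=
  ∃ g ∈ R, (G.s g = a ∧ G.t g = b) ∨ (G.s g = b ∧ G.t g = a)

/-- The subgraph spanned by the edge set `R` is connected. -/
def EdgeConnected (G : DiGraph) (R : Finset G.E) : Prop :=
  ∀ e ∈ R, ∀ f ∈ R, Relation.EqvGen (adjIn G R) (G.s e) (G.s f)

/-- `R` spans a dynamical region of `G`: it is connected, has at least one
edge, every boundary vertex is unstable in `G` but stable in `R` and in its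
complement, and no edge of `R` lies on an oriented cycle of `G` not contained
in `R`. -/
def IsDynRegion (G : DiGraph) (R : Finset G.E) : Prop :=
  R.Nonempty ∧ EdgeConnected G R ∧
  (∀ v : G.V, IncidentTo G R v → IncidentTo G (Finset.univ \ R) v →
     UnstableG G v ∧ StableIn G R v ∧ StableIn G (Finset.univ \ R) v) ∧
  (∀ c : List G.E, IsCohCycle G c → (∃ g ∈ c, g ∈ R) → ∀ g ∈ c, g ∈ R)

/-- A dynamical module is a minimal dynamical region. -/
def IsDynModule (G : DiGraph) (R : Finset G.E) : Prop :=
  IsDynRegion G R ∧ ∀ R' ⊆ R, IsDynRegion G R' → R' = R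

/-- `G` is a sink on `n+1` vertices. -/
def IsSinkGraph (G : DiGraph) : Prop :=
  Loopless G ∧ Fintype.card G.V = Fintype.card G.E + 1 ∧
    ∃! v : G.V, ∀ e : G.E, G.t e = v

/-- `G` is a source on `n+1` vertices. -/
def IsSourceGraph (G : DiGraph) : Prop :=
  Loopless G ∧ Fintype.card G.V = Fintype.card G.E + 1 ∧
    ∃! v : G.V, ∀ e : G.E, G.s e = v

/-- `R` spans a sink: all its edges are non-loops with a common target and
pairwise distinct sources. -/
def IsSinkSet (G : DiGraph) (R : Finset G.E) : Prop :=
  ∃ v : G.V, (∀ e ∈ R, G.t e = v ∧ G.s e ≠ v) ∧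
    ∀ e ∈ R, ∀ f ∈ R, G.s e = G.s f → e = f

/-- `R` spans a source. -/
def IsSourceSet (G : DiGraph) (R : Finset G.E) : Prop :=
  ∃ v : G.V, (∀ e ∈ R, G.s e = v ∧ G.t e ≠ v) ∧
    ∀ e ∈ R, ∀ f ∈ R, G.t e = G.t f → e = f

/-- The whole digraph `G` is a coherently oriented cycle. -/
def IsCohCycleGraph (G : DiGraph) : Prop :=
  ∃ c : List G.E, IsCohCycle G c ∧ (∀ e : G.E, e ∈ c) ∧
    ∀ v : G.V, ∃ g ∈ c, G.s g = v

/-- Rank function of the multipath matroid: the size of a largest multipath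
contained in `A`. -/
def mrank (G : DiGraph) (A : Finset G.E) : ℕ :=
  (A.powerset.filter (fun m => IsMultipath G m)).sup Finset.card

/-- The Tutte polynomial of the multipath matroid of `G`, evaluated at `(x,y)`. -/
def tutte (G : DiGraph) (x y : ℤ) : ℤ :=
  ∑ A : Finset G.E,
    (x - 1) ^ (mrank G Finset.univ - mrank G A) *
      (y - 1) ^ (A.card - mrank G A)

/-- `e` is a loop of the multipath matroid. -/
def IsMatroidLoop (G : DiGraph) (e : G.E) : Prop := ¬IsMultipath G {e}

/-- `e` is a coloop of the multipath matroid: it belongs to every maximal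
independent set. -/
def IsColoop (G : DiGraph) (e : G.E) : Prop :=
  ∀ m : Finset G.E, IsMultipath G m →
    (∀ m' : Finset G.E, IsMultipath G m' → m ⊆ m' → m' = m) → e ∈ m

/-- The digraph obtained from `G` by deleting the edge `e`. -/
def deleteEdge (G : DiGraph) (e : G.E) : DiGraph where
  V := G.V
  E := {f : G.E // f ≠ e}
  s := fun f => G.s f.val
  t := fun f => G.t f.val

/-- The vertex set of the MP-contraction `G ⫽ e`: the vertices of `G` other
than the endpoints of `e`, together with a new vertex `x = Sum.inr ()`. -/
def CVert (G : DiGraph) (e : G.E) : Type :=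
  {u : G.V // u ≠ G.s e ∧ u ≠ G.t e} ⊕ Unit

instance (G : DiGraph) (e : G.E) : Fintype (CVert G e) := by
  unfold CVert; infer_instance

instance (G : DiGraph) (e : G.E) : DecidableEq (CVert G e) := by
  unfold CVert; infer_instance

/-- Source, in `G ⫽ e`, of the edge coming from the edge `f` of `G`
(for `e = (v,w)`, the new source is `x` iff `s f ∈ {v,w}` or `t f = w`). -/
def contrS (G : DiGraph) (e f : G.E) : CVert G e :=
  if h : G.s f = G.s e ∨ G.s f = G.t e ∨ G.t f = G.t e then Sum.inr ()
  else Sum.inl ⟨G.s f, by push_neg at h; exact ⟨h.1, h.2.1⟩⟩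

/-- Target, in `G ⫽ e`, of the edge coming from the edge `f` of `G`
(for `e = (v,w)`, the new target is `x` iff `t f ∈ {v,w}` or `s f = v`). -/
def contrT (G : DiGraph) (e f : G.E) : CVert G e :=
  if h : G.t f = G.s e ∨ G.t f = G.t e ∨ G.s f = G.s e then Sum.inr ()
  else Sum.inl ⟨G.t f, by push_neg at h; exact ⟨h.1, h.2.1⟩⟩

/-- The MP-contraction `G ⫽ e`. -/
def mpContract (G : DiGraph) (e : G.E) : DiGraph where
  V := CVert G e
  E := {f : G.E // f ≠ e}
  s := fun f => contrS G e f.val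
  t := fun f => contrT G e f.val

/-- The digraph `C̃_e(G)`: the MP-contraction `G ⫽ e` with all loops at the
new vertex `x` deleted. -/
def tildeC (G : DiGraph) (e : G.E) : DiGraph where
  V := CVert G e
  E := {f : G.E // f ≠ e ∧
         ¬(contrS G e f = Sum.inr () ∧ contrT G e f = Sum.inr ())}
  s := fun f => contrS G e f.val
  t := fun f => contrT G e f.val

/-- The classical contraction `G / e` of a non-loop edge `e = (v,w)`:
identify `w` with `v` and delete `e`. -/
def contractClassical (G : DiGraph) (e : G.E) (hne : G.s e ≠ G.t e) : DiGraph where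
  V := {u : G.V // u ≠ G.t e}
  E := {f : G.E // f ≠ e}
  s := fun f => if h : G.s f.val = G.t e then ⟨G.s e, hne⟩ else ⟨G.s f.val, h⟩
  t := fun f => if h : G.t f.val = G.t e then ⟨G.s e, hne⟩ else ⟨G.t f.val, h⟩

/-- A flowing k-colouring of `G`. -/
def IsFlowing (G : DiGraph) (k : ℕ) (c : G.V → Fin k) : Prop :=
  (∀ e : G.E, c (G.s e) ≠ c (G.t e)) ∧
  (∀ e f : G.E, G.t e = G.t f → c (G.s e) = c (G.s f)) ∧
  (∀ e f : G.E, G.s e = G.s f → c (G.t e) = c (G.t f))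

/-- The number of flowing k-colourings of `G`. -/
def tau (G : DiGraph) (k : ℕ) : ℕ :=
  Nat.card {c : G.V → Fin k // IsFlowing G k c}

/-- The spanning subgraph of `G` with edge set `S`. -/
def subgraphOn (G : DiGraph) (S : Finset G.E) : DiGraph where
  V := G.V
  E := {f : G.E // f ∈ S}
  s := fun f => G.s f.val
  t := fun f => G.t f.val

/-- The underlying undirected multigraph of `G` contains a cycle
(of length ≥ 1; a single loop, or two parallel/antiparallel edges, count). -/
def HasUndirCycle (G : DiGraph) : Prop :=
  ∃ (n : ℕ) (ed : Fin n → G.E) (vx : Fin n → G.V),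
    0 < n ∧ Function.Injective ed ∧ Function.Injective vx ∧
    ∀ i : Fin n,
      (G.s (ed i) = vx i ∧ G.t (ed i) = vx ⟨(i.val + 1) % n, Nat.mod_lt _ i.pos⟩) ∨
      (G.t (ed i) = vx i ∧ G.s (ed i) = vx ⟨(i.val + 1) % n, Nat.mod_lt _ i.pos⟩)

/-- The underlying undirected multigraph of `G` is a forest. -/
def IsForestD (G : DiGraph) : Prop := ¬HasUndirCycle G

/-- The underlying undirected multigraph of `G` is a tree. -/
def IsTreeD (G : DiGraph) : Prop := ConnectedD G ∧ IsForestD G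

/-- The multipath matroid of `G` is representable over the field `F`. -/
def RepOver (G : DiGraph) (F : Type) [Field F] : Prop :=
  ∃ (n : ℕ) (N : Matrix (Fin n) G.E F),
    ∀ m : Finset G.E, IsMultipath G m ↔
      LinearIndependent F (fun f : {x : G.E // x ∈ m} => N.transpose f.val)

end DiGraph

/-- A finite undirected multigraph. -/
structure Multigraph where
  V : Type
  E : Type
  [fintV : Fintype V]
  [decV : DecidableEq V]
  [fintE : Fintype E]
  [decE : DecidableEq E]
  ends : E → Sym2 V

attribute [instance] Multigraph.fintV Multigraph.decV Multigraph.fintE Multigraph.decE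

/-- The multigraph `M` has a cycle all of whose edges lie in `F`. -/
def Multigraph.HasCycleIn (M : Multigraph) (F : Finset M.E) : Prop :=
  ∃ (n : ℕ) (ed : Fin n → M.E) (vx : Fin n → M.V),
    0 < n ∧ Function.Injective ed ∧ Function.Injective vx ∧
    (∀ i : Fin n, ed i ∈ F) ∧
    ∀ i : Fin n, M.ends (ed i) = s(vx i, vx ⟨(i.val + 1) % n, Nat.mod_lt _ i.pos⟩)

namespace MPAux

open DiGraph

/-- A forest has no loops. -/
lemma loopless_of_forest (G : DiGraph) (hf : G.IsForestD) : ∀ f : G.E, G.s f ≠ G.t f := by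
  intro f hsf
  apply hf
  refine ⟨1, fun _ => f, fun _ => G.s f, Nat.one_pos, ?_, ?_, ?_⟩
  · intro a b _; exact Subsingleton.elim a b
  · intro a b _; exact Subsingleton.elim a b
  · intro i
    exact Or.inl ⟨rfl, hsf.symm⟩

/-- A single non-loop edge is a multipath. -/
lemma singleton_multipath (G : DiGraph) (f : G.E) (h : G.s f ≠ G.t f) :
    G.IsMultipath {f} := by
  refine ⟨?_, ?_, ?_, ?_⟩
  · intro g hg; rw [Finset.mem_singleton] at hg; subst hg; exact h
  · intro g hg g' hg' _; rw [Finset.mem_singleton] at hg hg'; rw [hg, hg']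
  · intro g hg g' hg' _; rw [Finset.mem_singleton] at hg hg'; rw [hg, hg']
  · rintro ⟨c, hc, hmem⟩
    have hcf : ∀ g ∈ c, g = f := by
      intro g hg; have := hmem g hg; rwa [Finset.mem_singleton] at this
    obtain ⟨hne, hnd, _, hcyc⟩ := hc
    -- c = [f]
    obtain ⟨a, l, rfl⟩ := List.exists_cons_of_ne_nil hne
    have ha : a = f := hcf a List.mem_cons_self
    have hl : l = [] := by
      cases l with
      | nil => rfl
      | cons b l' =>
        exfalso
        have hb : b = f := hcf b (by simp)
        rw [List.nodup_cons] at hnd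
        exact hnd.1 (by simp [ha, hb])
    subst hl; subst ha
    have := hcyc ⟨0, by simp⟩
    simp at this
    exact h this.symm

/-- Every multipath extends to a maximal one. -/
lemma exists_maximal_multipath (G : DiGraph) (m0 : Finset G.E) (h0 : G.IsMultipath m0) :
    ∃ m : Finset G.E, G.IsMultipath m ∧ m0 ⊆ m ∧
      ∀ m' : Finset G.E, G.IsMultipath m' → m ⊆ m' → m' = m := by
  classical
  set s : Finset (Finset G.E) :=
    Finset.univ.powerset.filter (fun m => G.IsMultipath m ∧ m0 ⊆ m) with hs
  have hmem : ∀ m : Finset G.E, m ∈ s ↔ (G.IsMultipath m ∧ m0 ⊆ m) := by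
    intro m; simp [hs]
  have hne : s.Nonempty := ⟨m0, (hmem m0).2 ⟨h0, le_refl _⟩⟩
  obtain ⟨m, hm, hmax⟩ := Finset.exists_max_image s Finset.card hne
  rw [hmem] at hm
  refine ⟨m, hm.1, hm.2, ?_⟩
  intro m' hm' hsub
  have hm's : m' ∈ s := (hmem m').2 ⟨hm', hm.2.trans hsub⟩
  exact (Finset.eq_of_subset_of_card_le hsub (hmax m' hm's)).symm

end MPAux
namespace MPAux
open DiGraph

lemma coloop_unique_source (G : DiGraph) (hf : G.IsForestD) (e : G.E)
    (hco : G.IsColoop e) : ∀ f : G.E, G.s f = G.s e → f = e := by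
  intro f hsf
  by_contra hfe
  obtain ⟨m, hm, hsub, hmax⟩ :=
    exists_maximal_multipath G {f} (singleton_multipath G f (loopless_of_forest G hf f))
  have hem : e ∈ m := hco m hm hmax
  have hfm : f ∈ m := hsub (Finset.mem_singleton_self f)
  exact hfe (hm.2.1 f hfm e hem hsf)

lemma coloop_unique_target (G : DiGraph) (hf : G.IsForestD) (e : G.E)
    (hco : G.IsColoop e) : ∀ f : G.E, G.t f = G.t e → f = e := by
  intro f htf
  by_contra hfe
  obtain ⟨m, hm, hsub, hmax⟩ :=
    exists_maximal_multipath G {f} (singleton_multipath G f (loopless_of_forest G hf f))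
  have hem : e ∈ m := hco m hm hmax
  have hfm : f ∈ m := hsub (Finset.mem_singleton_self f)
  exact hfe (hm.2.2.1 f hfm e hem htf)

end MPAux
namespace MPAux
open DiGraph

/-- Undirected adjacency avoiding the edge `e`. -/
def Adj' (G : DiGraph) (e : G.E) (a b : G.V) : Prop :=
  ∃ g : G.E, g ≠ e ∧ ((G.s g = a ∧ G.t g = b) ∨ (G.s g = b ∧ G.t g = a))

lemma Adj'.symm {G : DiGraph} {e : G.E} {a b : G.V} (h : Adj' G e a b) : Adj' G e b a := by
  obtain ⟨g, hg, h⟩ := h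
  exact ⟨g, hg, h.symm⟩

/-- Reachability (undirectedly) from `u` to `t e` in `G − e`. -/
def Reach (G : DiGraph) (e : G.E) (u : G.V) : Prop :=
  Relation.ReflTransGen (Adj' G e) u (G.t e)

lemma reach_w (G : DiGraph) (e : G.E) : Reach G e (G.t e) := Relation.ReflTransGen.refl

lemma reach_iff {G : DiGraph} {e : G.E} {a b : G.V} (h : Adj' G e a b) :
    Reach G e a ↔ Reach G e b :=
  ⟨fun h' => Relation.ReflTransGen.head h.symm h', fun h' => Relation.ReflTransGen.head h h'⟩

lemma reach_s_iff_t {G : DiGraph} {e f : G.E} (hf : f ≠ e) :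
    Reach G e (G.s f) ↔ Reach G e (G.t f) :=
  reach_iff ⟨f, hf, Or.inl ⟨rfl, rfl⟩⟩

/-- From reachability get a `ℕ`-indexed chain. -/
lemma exists_chain {G : DiGraph} {e : G.E} {u : G.V} (h : Reach G e u) :
    ∃ (m : ℕ) (x : ℕ → G.V), x 0 = u ∧ x m = G.t e ∧
      ∀ i, i < m → Adj' G e (x i) (x (i + 1)) := by
  induction h using Relation.ReflTransGen.head_induction_on with
  | refl => exact ⟨0, fun _ => G.t e, rfl, rfl, fun i hi => absurd hi (Nat.not_lt_zero i)⟩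
  | head hab _ ih =>
    rename_i a b _
    obtain ⟨m, x, hx0, hxm, hstep⟩ := ih
    refine ⟨m + 1, fun i => if i = 0 then a else x (i - 1), by simp, by simp [hxm], ?_⟩
    intro i hi
    rcases Nat.eq_zero_or_pos i with h0 | hpos
    · subst h0
      simpa [hx0] using hab
    · have h1 : i ≠ 0 := Nat.pos_iff_ne_zero.mp hpos
      have h2 : i + 1 ≠ 0 := Nat.succ_ne_zero i
      simp only [h1, h2, if_false]
      have : i - 1 + 1 = i + 1 - 1 := by omega
      have hlt : i - 1 < m := by omega
      have := hstep (i - 1) hlt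
      convert this using 2
      omega


/-- In a forest, the source of `e` is not reachable from its target in `G − e`. -/
lemma not_reach_v {G : DiGraph} (hf : G.IsForestD) {e : G.E} (hne : G.s e ≠ G.t e) :
    ¬ Reach G e (G.s e) := by
  intro hr
  apply hf
  have hP : ∃ m : ℕ, ∃ x : ℕ → G.V, x 0 = G.s e ∧ x m = G.t e ∧
      ∀ i, i < m → Adj' G e (x i) (x (i + 1)) := exists_chain hr
  classical
  obtain ⟨x, hx0, hxm, hstep⟩ := Nat.find_spec hP
  set m0 := Nat.find hP with hm0def
  -- no repeated vertices in a minimal chain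
  have key : ∀ i j, i < j → j ≤ m0 → x i = x j → False := by
    intro i j hlt hj hxij
    have hshort : m0 - (j - i) < m0 := by omega
    have hy : ∃ y : ℕ → G.V, y 0 = G.s e ∧ y (m0 - (j - i)) = G.t e ∧
        ∀ i', i' < m0 - (j - i) → Adj' G e (y i') (y (i' + 1)) := by
      refine ⟨fun i' => if i' ≤ i then x i' else x (i' + (j - i)), by simp [hx0], ?_, ?_⟩
      · dsimp only
        by_cases hc : m0 - (j - i) ≤ i
        · have hji : m0 - (j - i) = i := by omega
          have hjm : j = m0 := by omega
          rw [if_pos hc, hji, hxij, hjm, hxm]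
        · rw [if_neg hc]
          have h5 : m0 - (j - i) + (j - i) = m0 := by omega
          rw [h5, hxm]
      · intro i' hi'
        dsimp only
        by_cases h1 : i' < i
        · rw [if_pos (le_of_lt h1), if_pos (Nat.succ_le_of_lt h1)]
          exact hstep i' (by omega)
        · by_cases h2 : i' = i
          · subst h2
            rw [if_pos (le_refl i'), if_neg (by omega : ¬ i' + 1 ≤ i')]
            have h6 : i' + 1 + (j - i') = j + 1 := by omega
            rw [h6, hxij]
            exact hstep j (by omega)
          · rw [if_neg (by omega : ¬ i' ≤ i), if_neg (by omega : ¬ i' + 1 ≤ i)]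
            have h7 : i' + 1 + (j - i) = i' + (j - i) + 1 := by omega
            rw [h7]
            exact hstep (i' + (j - i)) (by omega)
    have h8 := Nat.find_min' hP hy
    rw [← hm0def] at h8
    omega
  have hinj : ∀ i j, i ≤ m0 → j ≤ m0 → x i = x j → i = j := by
    intro i j hi hj hxij
    rcases Nat.lt_trichotomy i j with h | h | h
    · exact absurd (key i j h hj hxij) (fun h => h)
    · exact h
    · exact absurd (key j i h hi hxij.symm) (fun h => h)
  have hm0pos : 0 < m0 := by
    rcases Nat.eq_zero_or_pos m0 with h0 | h
    · exfalso; apply hne; rw [← hx0, ← hxm, h0]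
    · exact h
  have hg : ∀ i : ℕ, i < m0 → ∃ g : G.E, g ≠ e ∧
      ((G.s g = x i ∧ G.t g = x (i + 1)) ∨ (G.s g = x (i + 1) ∧ G.t g = x i)) :=
    fun i hi => hstep i hi
  choose g hgne hgor using hg
  refine ⟨m0 + 1,
    fun i => if h : (i : ℕ) < m0 then g i h else e,
    fun i => x i, Nat.succ_pos _, ?_, ?_, ?_⟩
  · -- injective ed
    intro i j hij
    dsimp only at hij
    by_cases hi : (i : ℕ) < m0 <;> by_cases hj : (j : ℕ) < m0
    · rw [dif_pos hi, dif_pos hj] at hij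
      have hoi := hgor i hi
      have hoj := hgor j hj
      rw [hij] at hoi
      apply Fin.ext
      rcases hoi with ⟨hs1, ht1⟩ | ⟨hs1, ht1⟩ <;> rcases hoj with ⟨hs2, ht2⟩ | ⟨hs2, ht2⟩
      · exact hinj i j (by omega) (by omega) (hs1.symm.trans hs2)
      · exfalso
        have h1 : (i : ℕ) = (j : ℕ) + 1 := hinj i (j+1) (by omega) (by omega) (hs1.symm.trans hs2)
        have h2 : (i : ℕ) + 1 = (j : ℕ) := hinj (i+1) j (by omega) (by omega) (ht1.symm.trans ht2)
        omega
      · exfalso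
        have h1 : (i : ℕ) + 1 = (j : ℕ) := hinj (i+1) j (by omega) (by omega) (hs1.symm.trans hs2)
        have h2 : (i : ℕ) = (j : ℕ) + 1 := hinj i (j+1) (by omega) (by omega) (ht1.symm.trans ht2)
        omega
      · exact hinj i j (by omega) (by omega) (ht1.symm.trans ht2)
    · rw [dif_pos hi, dif_neg hj] at hij
      exact absurd hij (hgne i hi)
    · rw [dif_neg hi, dif_pos hj] at hij
      exact absurd hij.symm (hgne j hj)
    · apply Fin.ext
      have h1 : (i : ℕ) = m0 := by omega
      have h2 : (j : ℕ) = m0 := by omega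
      rw [h1, h2]
  · -- injective vx
    intro i j hij
    dsimp only at hij
    exact Fin.ext (hinj i j (by omega) (by omega) hij)
  · -- cycle condition
    intro i
    dsimp only
    by_cases hi : (i : ℕ) < m0
    · rw [dif_pos hi]
      have hmod : ((i : ℕ) + 1) % (m0 + 1) = (i : ℕ) + 1 := Nat.mod_eq_of_lt (by omega)
      simp only [hmod]
      rcases hgor i hi with ⟨h1, h2⟩ | ⟨h1, h2⟩
      · exact Or.inl ⟨h1, h2⟩
      · exact Or.inr ⟨h2, h1⟩
    · have h1 : (i : ℕ) = m0 := by omega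
      rw [dif_neg hi]
      simp only [h1, Nat.mod_self]
      exact Or.inr ⟨hxm.symm, hx0.symm⟩

end MPAux
namespace MPAux
open DiGraph

/-- Flowing conditions for all edges other than `e`. -/
def Flow' (G : DiGraph) (e : G.E) (k : ℕ) (c : G.V → Fin k) : Prop :=
  (∀ f : G.E, f ≠ e → c (G.s f) ≠ c (G.t f)) ∧
  (∀ f g : G.E, f ≠ e → g ≠ e → G.t f = G.t g → c (G.s f) = c (G.s g)) ∧
  (∀ f g : G.E, f ≠ e → g ≠ e → G.s f = G.s g → c (G.t f) = c (G.t g))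

lemma isFlowing_iff {G : DiGraph} {e : G.E} {k : ℕ}
    (hs : ∀ f : G.E, G.s f = G.s e → f = e)
    (ht : ∀ f : G.E, G.t f = G.t e → f = e) (c : G.V → Fin k) :
    G.IsFlowing k c ↔ Flow' G e k c ∧ c (G.s e) ≠ c (G.t e) := by
  constructor
  · rintro ⟨h1, h2, h3⟩
    exact ⟨⟨fun f _ => h1 f, fun f g _ _ => h2 f g, fun f g _ _ => h3 f g⟩, h1 e⟩
  · rintro ⟨⟨h1, h2, h3⟩, hne⟩
    refine ⟨?_, ?_, ?_⟩
    · intro f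
      by_cases hf : f = e
      · subst hf; exact hne
      · exact h1 f hf
    · intro f g hfg
      by_cases hf : f = e
      · subst hf
        have := ht g hfg.symm
        subst this; rfl
      · by_cases hg : g = e
        · subst hg
          have := ht f hfg
          exact absurd this hf
        · exact h2 f g hf hg hfg
    · intro f g hfg
      by_cases hf : f = e
      · subst hf
        have := hs g hfg.symm
        subst this; rfl
      · by_cases hg : g = e
        · subst hg
          exact absurd (hs f hfg) hf
        · exact h3 f g hf hg hfg

/-- Permute the colours on the `t e` side only. -/
def Tw (G : DiGraph) (e : G.E) {k : ℕ} (σ : Equiv.Perm (Fin k)) (c : G.V → Fin k) :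
    G.V → Fin k :=
  fun u => if Reach G e u then σ (c u) else c u

lemma tw_apply_v {G : DiGraph} {e : G.E} {k : ℕ} (hv : ¬ Reach G e (G.s e))
    (σ : Equiv.Perm (Fin k)) (c : G.V → Fin k) :
    Tw G e σ c (G.s e) = c (G.s e) := if_neg hv

lemma tw_apply_w {G : DiGraph} {e : G.E} {k : ℕ}
    (σ : Equiv.Perm (Fin k)) (c : G.V → Fin k) :
    Tw G e σ c (G.t e) = σ (c (G.t e)) := if_pos (reach_w G e)

lemma tw_tw {G : DiGraph} {e : G.E} {k : ℕ} {σ : Equiv.Perm (Fin k)}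
    (hσ : ∀ x : Fin k, σ (σ x) = x) (c : G.V → Fin k) :
    Tw G e σ (Tw G e σ c) = c := by
  funext u
  by_cases h : Reach G e u <;> simp [Tw, h, hσ]

lemma tw_flow' {G : DiGraph} {e : G.E} {k : ℕ} (σ : Equiv.Perm (Fin k))
    {c : G.V → Fin k} (hc : Flow' G e k c) : Flow' G e k (Tw G e σ c) := by
  obtain ⟨h1, h2, h3⟩ := hc
  refine ⟨?_, ?_, ?_⟩
  · intro f hf
    by_cases hr : Reach G e (G.s f)
    · have hr' : Reach G e (G.t f) := (reach_s_iff_t hf).mp hr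
      simp only [Tw, if_pos hr, if_pos hr']
      exact fun h => h1 f hf (σ.injective h)
    · have hr' : ¬ Reach G e (G.t f) := fun h => hr ((reach_s_iff_t hf).mpr h)
      simp only [Tw, if_neg hr, if_neg hr']
      exact h1 f hf
  · intro f g hf hg hfg
    have hiff : Reach G e (G.s f) ↔ Reach G e (G.s g) := by
      rw [reach_s_iff_t hf, reach_s_iff_t hg, hfg]
    by_cases hr : Reach G e (G.s f)
    · have hr' := hiff.mp hr
      simp only [Tw, if_pos hr, if_pos hr']
      exact congrArg σ (h2 f g hf hg hfg)
    · have hr' : ¬ Reach G e (G.s g) := fun h => hr (hiff.mpr h)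
      simp only [Tw, if_neg hr, if_neg hr']
      exact h2 f g hf hg hfg
  · intro f g hf hg hfg
    have hiff : Reach G e (G.t f) ↔ Reach G e (G.t g) := by
      rw [← reach_s_iff_t hf, ← reach_s_iff_t hg, hfg]
    by_cases hr : Reach G e (G.t f)
    · have hr' := hiff.mp hr
      simp only [Tw, if_pos hr, if_pos hr']
      exact congrArg σ (h3 f g hf hg hfg)
    · have hr' : ¬ Reach G e (G.t g) := fun h => hr (hiff.mpr h)
      simp only [Tw, if_neg hr, if_neg hr']
      exact h3 f g hf hg hfg

lemma card_ne_fin (k : ℕ) (z : Fin k) : Nat.card {d : Fin k // d ≠ z} = k - 1 := by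
  rw [Nat.card_eq_fintype_card]
  simp only [Fintype.card_subtype_compl, Fintype.card_fin, Fintype.card_ofSubsingleton, ne_eq]
  simp

end MPAux
namespace MPAux
open DiGraph

/-- Extension of a colouring of `G/e` to `G`. -/
def extc (G : DiGraph) (e : G.E) (hne : G.s e ≠ G.t e) {k : ℕ}
    (c' : {u : G.V // u ≠ G.t e} → Fin k) : G.V → Fin k :=
  fun u => if h : u = G.t e then c' ⟨G.s e, hne⟩ else c' ⟨u, h⟩

lemma contr_s_eq (G : DiGraph) (e : G.E) (hne : G.s e ≠ G.t e) (f : G.E) (hf : f ≠ e) :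
    @Eq {u : G.V // u ≠ G.t e} ((G.contractClassical e hne).s ⟨f, hf⟩)
      (if h : G.s f = G.t e then ⟨G.s e, hne⟩ else ⟨G.s f, h⟩) := rfl

lemma contr_t_eq (G : DiGraph) (e : G.E) (hne : G.s e ≠ G.t e) (f : G.E) (hf : f ≠ e) :
    @Eq {u : G.V // u ≠ G.t e} ((G.contractClassical e hne).t ⟨f, hf⟩)
      (if h : G.t f = G.t e then ⟨G.s e, hne⟩ else ⟨G.t f, h⟩) := rfl

lemma extc_s (G : DiGraph) (e : G.E) (hne : G.s e ≠ G.t e) {k : ℕ}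
    (c' : {u : G.V // u ≠ G.t e} → Fin k) (f : G.E) (hf : f ≠ e) :
    extc G e hne c' (G.s f) = c' ((G.contractClassical e hne).s ⟨f, hf⟩) := by
  rw [contr_s_eq]
  by_cases h : G.s f = G.t e <;> simp [extc, h]

lemma extc_t (G : DiGraph) (e : G.E) (hne : G.s e ≠ G.t e) {k : ℕ}
    (c' : {u : G.V // u ≠ G.t e} → Fin k) (f : G.E) (hf : f ≠ e) :
    extc G e hne c' (G.t f) = c' ((G.contractClassical e hne).t ⟨f, hf⟩) := by
  rw [contr_t_eq]
  by_cases h : G.t f = G.t e <;> simp [extc, h]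

/-- Restriction of a `Flow'` colouring with `c v = c w` computes well. -/
lemma restr_s (G : DiGraph) (e : G.E) (hne : G.s e ≠ G.t e) {k : ℕ}
    (c : G.V → Fin k) (heq : c (G.s e) = c (G.t e)) (f : G.E) (hf : f ≠ e) :
    c ((G.contractClassical e hne).s ⟨f, hf⟩).1 = c (G.s f) := by
  rw [contr_s_eq]
  by_cases h : G.s f = G.t e
  · rw [dif_pos h, h]; exact heq
  · rw [dif_neg h]

lemma restr_t (G : DiGraph) (e : G.E) (hne : G.s e ≠ G.t e) {k : ℕ}
    (ht : ∀ f : G.E, G.t f = G.t e → f = e)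
    (c : G.V → Fin k) (f : G.E) (hf : f ≠ e) :
    c ((G.contractClassical e hne).t ⟨f, hf⟩).1 = c (G.t f) := by
  rw [contr_t_eq, dif_neg (fun h => hf (ht f h))]

lemma contr_t_inj (G : DiGraph) (e : G.E) (hne : G.s e ≠ G.t e)
    (ht : ∀ f : G.E, G.t f = G.t e → f = e) (f g : G.E) (hf : f ≠ e) (hg : g ≠ e)
    (h : (G.contractClassical e hne).t ⟨f, hf⟩ = (G.contractClassical e hne).t ⟨g, hg⟩) :
    G.t f = G.t g := by
  rw [contr_t_eq, contr_t_eq, dif_neg (fun h' => hf (ht f h')),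
    dif_neg (fun h' => hg (ht g h'))] at h
  exact congrArg Subtype.val h

lemma contr_s_inj (G : DiGraph) (e : G.E) (hne : G.s e ≠ G.t e)
    (hs : ∀ f : G.E, G.s f = G.s e → f = e) (f g : G.E) (hf : f ≠ e) (hg : g ≠ e)
    (h : (G.contractClassical e hne).s ⟨f, hf⟩ = (G.contractClassical e hne).s ⟨g, hg⟩) :
    G.s f = G.s g := by
  rw [contr_s_eq, contr_s_eq] at h
  by_cases ha : G.s f = G.t e <;> by_cases hb : G.s g = G.t e
  · rw [ha, hb]
  · rw [dif_pos ha, dif_neg hb] at h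
    exact absurd (hs g (congrArg Subtype.val h).symm) hg
  · rw [dif_neg ha, dif_pos hb] at h
    exact absurd (hs f (congrArg Subtype.val h)) hf
  · rw [dif_neg ha, dif_neg hb] at h
    exact congrArg Subtype.val h

lemma card_contract (G : DiGraph) (e : G.E) (hne : G.s e ≠ G.t e) (k : ℕ)
    (hs : ∀ f : G.E, G.s f = G.s e → f = e)
    (ht : ∀ f : G.E, G.t f = G.t e → f = e) :
    (G.contractClassical e hne).tau k =
      Nat.card {c : G.V → Fin k // Flow' G e k c ∧ c (G.s e) = c (G.t e)} := by
  apply Nat.card_congr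
  refine ⟨fun p => ⟨extc G e hne p.1, ?_, ?_⟩, fun q => ⟨fun u => q.1 u.1, ?_, ?_, ?_⟩, ?_, ?_⟩
  · -- extc is Flow'
    obtain ⟨c', hcf⟩ := p
    obtain ⟨h1, h2, h3⟩ := hcf
    refine ⟨?_, ?_, ?_⟩
    · intro f hf
      rw [extc_s G e hne c' f hf, extc_t G e hne c' f hf]
      exact h1 ⟨f, hf⟩
    · intro f g hf hg hfg
      rw [extc_s G e hne c' f hf, extc_s G e hne c' g hg]
      apply h2 ⟨f, hf⟩ ⟨g, hg⟩
      rw [contr_t_eq, contr_t_eq]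
      by_cases h : G.t f = G.t e
      · rw [dif_pos h, dif_pos (hfg ▸ h)]
      · rw [dif_neg h, dif_neg (hfg ▸ h)]
        exact Subtype.ext hfg
    · intro f g hf hg hfg
      rw [extc_t G e hne c' f hf, extc_t G e hne c' g hg]
      apply h3 ⟨f, hf⟩ ⟨g, hg⟩
      rw [contr_s_eq, contr_s_eq]
      by_cases h : G.s f = G.t e
      · rw [dif_pos h, dif_pos (hfg ▸ h)]
      · rw [dif_neg h, dif_neg (hfg ▸ h)]
        exact Subtype.ext hfg
  · -- extc agrees at v and w
    show (if h : G.s e = G.t e then _ else _) = (if h : G.t e = G.t e then _ else _)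
    rw [dif_neg hne, dif_pos rfl]
  · -- restriction: edge inequality
    rintro ⟨f, hf⟩
    obtain ⟨c, hq⟩ := q
    obtain ⟨⟨h1, h2, h3⟩, heq⟩ := hq
    dsimp only
    rw [restr_s G e hne c heq f hf, restr_t G e hne ht c f hf]
    exact h1 f hf
  · -- restriction: common targets
    rintro ⟨f, hf⟩ ⟨g, hg⟩ hfg
    obtain ⟨c, hq⟩ := q
    obtain ⟨⟨h1, h2, h3⟩, heq⟩ := hq
    dsimp only at hfg ⊢
    rw [restr_s G e hne c heq f hf, restr_s G e hne c heq g hg]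
    exact h2 f g hf hg (contr_t_inj G e hne ht f g hf hg hfg)
  · -- restriction: common sources
    rintro ⟨f, hf⟩ ⟨g, hg⟩ hfg
    obtain ⟨c, hq⟩ := q
    obtain ⟨⟨h1, h2, h3⟩, heq⟩ := hq
    dsimp only at hfg ⊢
    rw [restr_t G e hne ht c f hf, restr_t G e hne ht c g hg]
    exact h3 f g hf hg (contr_s_inj G e hne hs f g hf hg hfg)
  · -- left inverse
    rintro ⟨c', hc'⟩
    apply Subtype.ext
    funext u
    show (if h : u.1 = G.t e then _ else _) = c' u
    rw [dif_neg u.2]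
    rfl
  · -- right inverse
    rintro ⟨c, hc⟩
    apply Subtype.ext
    funext u
    show (if h : u = G.t e then _ else _) = c u
    by_cases h : u = G.t e
    · rw [dif_pos h, h]
      exact hc.2
    · rw [dif_neg h]

end MPAux
namespace MPAux
open DiGraph

lemma card_neq (G : DiGraph) (e : G.E) (k : ℕ) (hk : 1 ≤ k)
    (hv : ¬ Reach G e (G.s e)) :
    Nat.card {c : G.V → Fin k // Flow' G e k c ∧ c (G.s e) ≠ c (G.t e)} =
      (k - 1) * Nat.card {c : G.V → Fin k // Flow' G e k c ∧ c (G.s e) = c (G.t e)} := by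
  set z : Fin k := ⟨0, hk⟩ with hz
  have hE : {c : G.V → Fin k // Flow' G e k c ∧ c (G.s e) ≠ c (G.t e)} ≃
      ({c : G.V → Fin k // Flow' G e k c ∧ c (G.s e) = c (G.t e)} × {d : Fin k // d ≠ z}) := by
    refine ⟨fun p => (⟨Tw G e (Equiv.swap (p.1 (G.s e)) (p.1 (G.t e))) p.1, ?_, ?_⟩,
        ⟨Equiv.swap (p.1 (G.s e)) z (p.1 (G.t e)), ?_⟩),
      fun q => ⟨Tw G e (Equiv.swap (q.1.1 (G.s e)) (Equiv.swap (q.1.1 (G.s e)) z q.2.1)) q.1.1,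
        ?_, ?_⟩, ?_, ?_⟩
    · exact tw_flow' _ p.2.1
    · rw [tw_apply_v hv, tw_apply_w, Equiv.swap_apply_right]
    · -- swap a z b ≠ z
      intro hcon
      have h2 : Equiv.swap (p.1 (G.s e)) z (p.1 (G.s e)) = z := Equiv.swap_apply_left _ _
      exact p.2.2 (((Equiv.swap (p.1 (G.s e)) z).injective (hcon.trans h2.symm)).symm)
    · exact tw_flow' _ q.1.2.1
    · -- c v ≠ c w for the constructed colouring
      rw [tw_apply_v hv, tw_apply_w, ← q.1.2.2, Equiv.swap_apply_left]
      intro hcon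
      apply q.2.2
      have := (Equiv.swap (q.1.1 (G.s e)) z).injective
        (show Equiv.swap (q.1.1 (G.s e)) z q.2.1 =
          Equiv.swap (q.1.1 (G.s e)) z z from by rw [Equiv.swap_apply_right, ← hcon])
      exact this
    · -- left inverse
      rintro ⟨c, hc1, hc2⟩
      apply Subtype.ext
      dsimp only
      rw [tw_apply_v hv, Equiv.swap_apply_self]
      exact tw_tw (Equiv.swap_apply_self _ _) c
    · -- right inverse
      rintro ⟨⟨c, hc1, hc2⟩, ⟨d, hd⟩⟩
      dsimp only
      have hw : Tw G e (Equiv.swap (c (G.s e)) (Equiv.swap (c (G.s e)) z d)) c (G.t e) =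
          Equiv.swap (c (G.s e)) z d := by
        rw [tw_apply_w, ← hc2, Equiv.swap_apply_left]
      have hv' : Tw G e (Equiv.swap (c (G.s e)) (Equiv.swap (c (G.s e)) z d)) c (G.s e) =
          c (G.s e) := tw_apply_v hv _ _
      refine Prod.ext ?_ ?_
      · apply Subtype.ext
        dsimp only
        rw [hv', hw]
        exact tw_tw (Equiv.swap_apply_self _ _) c
      · apply Subtype.ext
        dsimp only
        rw [hv', hw, Equiv.swap_apply_self]
  rw [Nat.card_congr hE, Nat.card_prod, card_ne_fin k z, Nat.mul_comm]

end MPAux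


/-- If `G` is an MP-tree and `e = (v,w)` is a coloop of
`M_G`, then for every `k ≥ 1` the number of flowing `k`-colourings satisfies
`τ_G(k) = (k-1)·τ_{G/e}(k)`, where `G/e` is the classical contraction. -/
theorem coloop_colouring_contraction (G : DiGraph) (hU : G.EdgeUnique)
    (hMP : G.IsMPDigraph) (htree : G.IsTreeD) (e : G.E)
    (hne : G.s e ≠ G.t e) (hco : DiGraph.IsColoop G e)
    (k : ℕ) (hk : 1 ≤ k) :
    G.tau k = (k - 1) * (DiGraph.contractClassical G e hne).tau k := by
  have hforest := htree.2
  have hs := MPAux.coloop_unique_source G hforest e hco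
  have ht := MPAux.coloop_unique_target G hforest e hco
  have hv := MPAux.not_reach_v hforest hne
  have h1 : G.tau k =
      Nat.card {c : G.V → Fin k // MPAux.Flow' G e k c ∧ c (G.s e) ≠ c (G.t e)} :=
    Nat.card_congr (Equiv.subtypeEquivRight (fun c => MPAux.isFlowing_iff hs ht c))
  rw [h1, MPAux.card_contract G e hne k hs ht]
  exact MPAux.card_neq G e k hk hv
end
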